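/- Let π be a nondecreasing parking function of length n and let 0 ≤ j ≤ n. If c, c' ∈ PF_j satisfy c↑ = c'↑ and d, d' ∈ PF_{n−j} satisfy d↑ = d'↑, then #{ a ∈ PF_n : a↑ = π, Park(a_1⋯a_j) = c, Park(a_{j+1}⋯a_n) = d } = #{ a ∈ PF_n : a↑ = π, Park(a_1⋯a_j) = c', Park(a_{j+1}⋯a_n) = d' }. (This expresses that the class sums P^π = Σ_{a↑=π} F_a span a subcoalgebra CQSym of PQSym.) -/

import Mathlib

open List

/-- `sortW w` is the nondecreasing rearrangement `w↑` of the word `w`. -/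
def sortW (w : List ℕ) : List ℕ := w.mergeSort (fun a b => decide (a ≤ b))

/-- `a` is a parking function: a word over the positive integers whose
nondecreasing rearrangement `a↑ = a'₁ ⋯ a'ₙ` satisfies `a'ᵢ ≤ i` for all `i`. -/
def IsPF (a : List ℕ) : Prop :=
  (∀ x ∈ a, 1 ≤ x) ∧ ∀ i, i < a.length → (sortW a).getD i 0 ≤ i + 1

/-- `dW w = min { i ≥ 1 : #{j : wⱼ ≤ i} < i }`. -/
noncomputable def dW (w : List ℕ) : ℕ := sInf {i | 1 ≤ i ∧ w.countP (fun x => decide (x ≤ i)) < i}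

/-- Decrement by one every letter strictly greater than `d`. -/
def decAbove (d : ℕ) (w : List ℕ) : List ℕ := w.map (fun x => if d < x then x - 1 else x)

lemma mem_dW_set (w : List ℕ) :
    (w.length + 1) ∈ {i | 1 ≤ i ∧ w.countP (fun x => decide (x ≤ i)) < i} := by
  refine ⟨by omega, ?_⟩
  have := w.countP_le_length (p := fun x => decide (x ≤ w.length + 1))
  omega

lemma decAbove_sum_lt {w : List ℕ} (h : dW w ≠ w.length + 1) :
    (decAbove (dW w) w).sum < w.sum := by
  have hmem : 1 ≤ dW w ∧ w.countP (fun x => decide (x ≤ dW w)) < dW w := Nat.sInf_mem (⟨_, mem_dW_set w⟩ : Set.Nonempty _)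
  have hle : dW w ≤ w.length + 1 := Nat.sInf_le (mem_dW_set w)
  obtain ⟨h1, h2⟩ := hmem
  have hlen : dW w ≤ w.length := by omega
  -- there is a letter strictly greater than `dW w`
  have hx : ∃ x ∈ w, ¬ (x ≤ dW w) := by
    by_contra hc
    push_neg at hc
    have : w.countP (fun x => decide (x ≤ dW w)) = w.length := by
      rw [List.countP_eq_length]
      intro a ha
      simpa using hc a ha
    omega
  obtain ⟨x, hxw, hxd⟩ := hx
  have := List.sum_lt_sum (l := w) (f := fun y => if dW w < y then y - 1 else y) (g := id)
    (fun i _ => by dsimp; split <;> omega)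
    ⟨x, hxw, by dsimp; rw [if_pos (by omega)]; omega⟩
  simpa [decAbove] using this

/-- The parkization `Park(w)` of a word `w` over the positive integers. -/
noncomputable def park (w : List ℕ) : List ℕ :=
  if h : dW w = w.length + 1 then w
  else
    have : (decAbove (dW w) w).sum < w.sum := decAbove_sum_lt h
    park (decAbove (dW w) w)
termination_by w.sum

/-- The standardization `Std(w)`: its `i`-th letter is `#{j : wⱼ ≤ wᵢ}`. -/
def stdW (w : List ℕ) : List ℕ := w.map (fun x => w.countP (fun y => decide (y ≤ x)))

/-- `v[k]`: shift every letter of `v` by `k`. -/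
def shiftW (k : ℕ) (v : List ℕ) : List ℕ := v.map (· + k)

/-- Shifted concatenation `u • v = u · v[k]`, `k = |u|`. -/
def sconc (u v : List ℕ) : List ℕ := u ++ shiftW u.length v

/-- The multiset of all shuffles of two words, counted with multiplicity. -/
def shuffles : List ℕ → List ℕ → Multiset (List ℕ)
  | [], v => {v}
  | x :: u, [] => {x :: u}
  | x :: u, y :: v =>
      (shuffles u (y :: v)).map (fun w => x :: w) + (shuffles (x :: u) v).map (fun w => y :: w)
termination_by u v => u.length + v.length

/-- Shifted shuffle `u ⋒ v`, a multiset of words. -/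
def sshuffle (u v : List ℕ) : Multiset (List ℕ) := shuffles u (shiftW u.length v)

/-- Iterated shifted shuffle `u₁ ⋒ u₂ ⋒ ⋯ ⋒ u_r`. -/
def itersShuffle : List (List ℕ) → Multiset (List ℕ)
  | [] => {[]}
  | u :: rest => (itersShuffle rest).bind (fun v => sshuffle u v)

/-- Lexicographic pair-encoding `a ⊛ b` of two words of length `n` with letters in `[n]`:
the `i`-th letter is `(aᵢ - 1)·n + bᵢ`. -/
def pairEnc (n : ℕ) (a b : List ℕ) : List ℕ := List.zipWith (fun x y => (x - 1) * n + y) a b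

/-- The internal product `a * b := Park(a ⊛ b)` of two parking functions of the same length. -/
noncomputable def iprod (a b : List ℕ) : List ℕ := park (pairEnc a.length a b)

/-- The word `1^m` of length `m` with all letters equal to `1`. -/
def onesW (m : ℕ) : List ℕ := List.replicate m 1

/-- The multiset (without repetition) of all words `a` with `a↑ = π`. -/
def classM (π : List ℕ) : Multiset (List ℕ) :=
  (↑(π.permutations.dedup) : Multiset (List ℕ)).filter (fun a => sortW a = π)

open Classical in
/-- The finite set of all parking functions of length `n`. -/
noncomputable def PFfin (n : ℕ) : Finset (List ℕ) :=
  ((Finset.univ : Finset (Fin n → Fin n)).image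
    (fun f => List.ofFn (fun i => (f i : ℕ) + 1))).filter IsPF

/-- Split a word into consecutive factors of the given lengths. -/
def splitFactors : List ℕ → List ℕ → List (List ℕ)
  | [], _ => []
  | k :: ks, e => e.take k :: splitFactors ks (e.drop k)

/-- Iterated shifted concatenation. -/
def sconcAll : List (List ℕ) → List ℕ
  | [] => []
  | u :: rest => sconc u (sconcAll rest)

/-- Multiset of tuples `(a₁, …, a_r)` (as lists) with `aᵢ↑ = πᵢ`. -/
def tuplesM : List (List ℕ) → Multiset (List (List ℕ))
  | [] => {[]}
  | p :: ps => (classM p).bind (fun a => (tuplesM ps).map (fun A => a :: A))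

/-- `π'` is a successor of `π`: the evaluation of `π'` is obtained from that of `π`
by merging two consecutive (modulo zeros) nonzero entries onto the left one. -/
def IsSuccEv (π π' : List ℕ) : Prop :=
  ∃ i j : ℕ, 1 ≤ i ∧ i < j ∧ π.count i ≠ 0 ∧ π.count j ≠ 0 ∧
    (∀ k, i < k → k < j → π.count k = 0) ∧
    (∀ m, π'.count m = if m = i then π.count i + π.count j else if m = j then 0 else π.count m)

/-- The partial order `π ⪯ π'`: reflexive–transitive closure of the successor relation. -/
def succeq (π π' : List ℕ) : Prop := Relation.ReflTransGen IsSuccEv π π'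


/-! ### Auxiliary development for the proof -/

section Aux

lemma park_eq' (w : List ℕ) : park w =
    if dW w = w.length + 1 then w else park (decAbove (dW w) w) := by
  rw [park]
  split <;> simp_all

lemma decAbove_length' (d : ℕ) (l : List ℕ) : (decAbove d l).length = l.length := by
  simp [decAbove]

lemma sortW_sorted (w : List ℕ) : List.Pairwise (· ≤ ·) (sortW w) := by
  have := List.pairwise_mergeSort (le := fun a b : ℕ => decide (a ≤ b))
    (by intro a b c; simp; omega) (by intro a b; simp; omega) w
  unfold sortW
  refine this.imp ?_
  intro a b h; simpa using h

lemma sortW_perm (w : List ℕ) : sortW w ~ w := List.mergeSort_perm w _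

lemma sortW_eq_of_perm {u v : List ℕ} (h : u ~ v) : sortW u = sortW v :=
  List.Perm.eq_of_pairwise' (sortW_sorted u) (sortW_sorted v)
    ((sortW_perm u).trans (h.trans (sortW_perm v).symm))

/-- Apply a "permutation list" `p` to a word `l`: position `i` gets letter `l[p i]`. -/
def applyP (p l : List ℕ) : List ℕ := p.map (fun i => l.getD i 0)

lemma applyP_length (p l : List ℕ) : (applyP p l).length = p.length := by
  simp [applyP]

lemma map_getD_range (l : List ℕ) : (List.range l.length).map (fun i => l.getD i 0) = l := by
  apply List.ext_getElem
  · simp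
  · intro i h1 h2
    simp only [getElem_map, getElem_range]
    rw [List.getD_eq_getElem]

lemma applyP_perm {p l : List ℕ} (hp : p ~ List.range l.length) : applyP p l ~ l := by
  calc applyP p l ~ (List.range l.length).map (fun i => l.getD i 0) := hp.map _
  _ = l := map_getD_range l

lemma applyP_decAbove {p l : List ℕ} (d : ℕ) (hp : p ~ List.range l.length) :
    applyP p (decAbove d l) = decAbove d (applyP p l) := by
  simp only [applyP, decAbove, List.map_map]
  apply List.map_congr_left
  intro i hi
  have hlt : i < l.length := by
    have := hp.mem_iff.mp hi
    simpa using this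
  simp only [Function.comp]
  rw [List.getD_eq_getElem _ _ (by simpa using hlt), List.getD_eq_getElem _ _ hlt]
  simp

lemma dW_perm {u v : List ℕ} (h : u ~ v) : dW u = dW v := by
  unfold dW
  congr 1
  ext i
  simp [h.countP_eq]

lemma park_applyP' (N : ℕ) : ∀ (l p : List ℕ), l.sum ≤ N → p ~ List.range l.length →
    park (applyP p l) = applyP p (park l) := by
  induction N using Nat.strong_induction_on with
  | _ N IH =>
    intro l p hsum hp
    have hlen : (applyP p l).length = l.length := by
      rw [applyP_length, hp.length_eq, List.length_range]
    have hd : dW (applyP p l) = dW l := dW_perm (applyP_perm hp)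
    rw [park_eq' l, park_eq' (applyP p l)]
    by_cases hc : dW l = l.length + 1
    · rw [if_pos (by rw [hd, hlen]; exact hc), if_pos hc]
    · rw [if_neg (by rw [hd, hlen]; exact hc), if_neg hc, hd,
        ← applyP_decAbove (dW l) hp]
      have hslt := decAbove_sum_lt hc
      by_cases hN : N = 0
      · omega
      · exact IH (decAbove (dW l) l).sum (by omega) _ p (le_refl _)
          (by rwa [decAbove_length'])

lemma applyP_comp (p1 p2 l : List ℕ) (h : ∀ i ∈ p2, i < p1.length) :
    applyP (p2.map (fun i => p1.getD i 0)) l = applyP p2 (applyP p1 l) := by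
  simp only [applyP, List.map_map]
  apply List.map_congr_left
  intro i hi
  simp only [Function.comp]
  rw [List.getD_eq_getElem (p1.map _) _ (by simpa using h i hi), getElem_map,
    ← List.getD_eq_getElem p1 _ (h i hi)]

lemma exists_applyP {u v : List ℕ} (h : u ~ v) :
    ∃ p, p ~ List.range u.length ∧ applyP p u = v := by
  induction h with
  | nil => exact ⟨[], by simp, rfl⟩
  | cons x h IH =>
    obtain ⟨p, hp, he⟩ := IH
    refine ⟨0 :: p.map (· + 1), ?_, ?_⟩
    · rw [List.length_cons, List.range_succ_eq_map]
      exact (hp.map _).cons 0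
    · simp only [applyP, List.map_cons, List.map_map, Function.comp,
        List.getD_cons_zero, List.getD_cons_succ]
      rw [← he]
      rfl
  | swap x y t =>
    refine ⟨1 :: 0 :: (List.range t.length).map (· + 2), ?_, ?_⟩
    · have : List.range (t.length + 2) = 0 :: 1 :: (List.range t.length).map (· + 2) := by
        rw [List.range_succ_eq_map, List.range_succ_eq_map, List.map_cons, List.map_map]
        rfl
      rw [List.length_cons, List.length_cons, this]
      exact List.Perm.swap 0 1 _
    · simp only [applyP, List.map_cons, List.map_map, Function.comp,
        List.getD_cons_zero, List.getD_cons_succ]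
      have h2 : (List.range t.length).map ((fun i => (y :: x :: t).getD i 0) ∘ fun z => z + 2)
          = (List.range t.length).map (fun i => t.getD i 0) :=
        List.map_congr_left (fun i _ => by simp [List.getD_cons_succ])
      rw [h2, map_getD_range]
  | trans h1 h2 IH1 IH2 =>
    obtain ⟨p1, hp1, he1⟩ := IH1
    obtain ⟨p2, hp2, he2⟩ := IH2
    have hlen : p1.length = _ := hp1.length_eq
    rw [List.length_range] at hlen
    have e := h1.length_eq
    refine ⟨p2.map (fun i => p1.getD i 0), ?_, ?_⟩
    · have hp2' : p2 ~ List.range p1.length := by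
        rw [hlen, e]; exact hp2
      calc p2.map (fun i => p1.getD i 0)
          ~ (List.range p1.length).map (fun i => p1.getD i 0) := hp2'.map _
        _ = p1 := map_getD_range p1
        _ ~ _ := hp1
    · rw [applyP_comp _ _ _ (fun i hi => by
        have hm : i ∈ List.range _ := hp2.mem_iff.mp hi
        rw [List.mem_range] at hm
        rw [hlen]
        omega), he1, he2]

/-- The inverse permutation list. -/
def invP (m : ℕ) (p : List ℕ) : List ℕ := (List.range m).map (fun i => p.idxOf i)

lemma invP_spec {m : ℕ} {p : List ℕ} (hp : p ~ List.range m) :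
    invP m p ~ List.range m ∧
      ∀ l : List ℕ, l.length = m → applyP (invP m p) (applyP p l) = l := by
  have hplen : p.length = m := by rw [hp.length_eq, List.length_range]
  have hmem : ∀ i, i ∈ p ↔ i < m := fun i => by rw [hp.mem_iff, List.mem_range]
  have hkey : ∀ i < m, p.getD (p.idxOf i) 0 = i := by
    intro i hi
    have hil : p.idxOf i < p.length := List.idxOf_lt_length_iff.mpr ((hmem i).mpr hi)
    rw [List.getD_eq_getElem _ _ hil, List.getElem_idxOf]
  constructor
  · have hnd : (invP m p).Nodup := by
      apply List.Nodup.map_on _ ((List.nodup_range (n := m)))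
      intro i hi i' hi' hEq
      rw [List.mem_range] at hi hi'
      have := hkey i hi
      rw [hEq, hkey i' hi'] at this
      omega
    have hsub : invP m p ⊆ List.range m := by
      intro x hx
      simp only [invP, List.mem_map] at hx
      obtain ⟨i, hi, rfl⟩ := hx
      rw [List.mem_range] at hi ⊢
      rw [← hplen]
      exact List.idxOf_lt_length_iff.mpr ((hmem i).mpr hi)
    exact (List.subperm_of_subset hnd hsub).perm_of_length_le (by simp [invP])
  · intro l hl
    rw [← applyP_comp _ _ _ (fun i hi => by
      simp only [invP, List.mem_map] at hi
      obtain ⟨k, hk, rfl⟩ := hi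
      rw [List.mem_range] at hk
      exact List.idxOf_lt_length_iff.mpr ((hmem k).mpr hk))]
    have : (invP m p).map (fun i => p.getD i 0) = List.range m := by
      simp only [invP, List.map_map]
      calc (List.range m).map ((fun i => p.getD i 0) ∘ fun i => p.idxOf i)
          = (List.range m).map id := by
            apply List.map_congr_left
            intro i hi
            rw [List.mem_range] at hi
            exact hkey i hi
        _ = List.range m := List.map_id _
    rw [this, ← hl]
    exact map_getD_range l

lemma card_le_aux (n j : ℕ) (hj : j ≤ n) (pi c c' d d' : List ℕ)
    (hlpi : pi.length = n)
    (p q : List ℕ) (hp : p ~ List.range j) (hq : q ~ List.range (n - j))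
    (hpc : applyP p c = c') (hqd : applyP q d = d') :
    {a : List ℕ | IsPF a ∧ sortW a = pi ∧ park (a.take j) = c ∧
        park (a.drop j) = d}.ncard
      ≤ {a : List ℕ | IsPF a ∧ sortW a = pi ∧ park (a.take j) = c' ∧
          park (a.drop j) = d'}.ncard := by
  set S := {a : List ℕ | IsPF a ∧ sortW a = pi ∧ park (a.take j) = c ∧
      park (a.drop j) = d} with hS
  set S' := {a : List ℕ | IsPF a ∧ sortW a = pi ∧ park (a.take j) = c' ∧
      park (a.drop j) = d'} with hS'
  set Φ : List ℕ → List ℕ :=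
    fun a => applyP p (a.take j) ++ applyP q (a.drop j) with hΦ
  have hlenA : ∀ a : List ℕ, sortW a = pi → a.length = n := by
    intro a ha
    have := (sortW_perm a).length_eq
    rw [ha, hlpi] at this
    omega
  have lentake : ∀ a : List ℕ, (applyP p (a.take j)).length = j := by
    intro a
    rw [applyP_length, hp.length_eq, List.length_range]
  have htakeΦ : ∀ a : List ℕ, (Φ a).take j = applyP p (a.take j) :=
    fun a => List.take_left' (lentake a)
  have hdropΦ : ∀ a : List ℕ, (Φ a).drop j = applyP q (a.drop j) :=
    fun a => List.drop_left' (lentake a)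
  have hpa : ∀ a : List ℕ, a.length = n → p ~ List.range (a.take j).length := by
    intro a ha
    have : (a.take j).length = j := by rw [List.length_take]; omega
    rw [this]; exact hp
  have hqa : ∀ a : List ℕ, a.length = n → q ~ List.range (a.drop j).length := by
    intro a ha
    have : (a.drop j).length = n - j := by rw [List.length_drop]; omega
    rw [this]; exact hq
  have hpermΦ : ∀ a : List ℕ, a.length = n → Φ a ~ a := by
    intro a ha
    calc applyP p (a.take j) ++ applyP q (a.drop j)
        ~ a.take j ++ a.drop j := (applyP_perm (hpa a ha)).append (applyP_perm (hqa a ha))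
      _ = a := List.take_append_drop j a
  have himg : ∀ a ∈ S, Φ a ∈ S' := by
    intro a ha
    obtain ⟨haPF, hasort, hapark1, hapark2⟩ := ha
    have hlena : a.length = n := hlenA a hasort
    have hperm : Φ a ~ a := hpermΦ a hlena
    have hsortΦ : sortW (Φ a) = pi := by rw [sortW_eq_of_perm hperm, hasort]
    refine ⟨⟨?_, ?_⟩, hsortΦ, ?_, ?_⟩
    · intro x hx
      exact haPF.1 x (hperm.mem_iff.mp hx)
    · intro i hi
      rw [hperm.length_eq] at hi
      rw [hsortΦ, ← hasort]
      exact haPF.2 i hi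
    · rw [htakeΦ a, park_applyP' (a.take j).sum (a.take j) p le_rfl (hpa a hlena),
        hapark1, hpc]
    · rw [hdropΦ a, park_applyP' (a.drop j).sum (a.drop j) q le_rfl (hqa a hlena),
        hapark2, hqd]
  obtain ⟨_, hpinv⟩ := invP_spec hp
  obtain ⟨_, hqinv⟩ := invP_spec hq
  have hinj : Set.InjOn Φ S := by
    intro a1 ha1 a2 ha2 hEq
    have hl1 : a1.length = n := hlenA a1 ha1.2.1
    have hl2 : a2.length = n := hlenA a2 ha2.2.1
    have ht1 : (a1.take j).length = j := by rw [List.length_take]; omega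
    have ht2 : (a2.take j).length = j := by rw [List.length_take]; omega
    have hd1 : (a1.drop j).length = n - j := by rw [List.length_drop]; omega
    have hd2 : (a2.drop j).length = n - j := by rw [List.length_drop]; omega
    have hte : applyP p (a1.take j) = applyP p (a2.take j) := by
      rw [← htakeΦ a1, ← htakeΦ a2, hEq]
    have hde : applyP q (a1.drop j) = applyP q (a2.drop j) := by
      rw [← hdropΦ a1, ← hdropΦ a2, hEq]
    have h1 : a1.take j = a2.take j := by
      rw [← hpinv (a1.take j) ht1, ← hpinv (a2.take j) ht2, hte]
    have h2 : a1.drop j = a2.drop j := by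
      rw [← hqinv (a1.drop j) hd1, ← hqinv (a2.drop j) hd2, hde]
    rw [← List.take_append_drop j a1, ← List.take_append_drop j a2, h1, h2]
  have hfin' : S'.Finite := by
    apply Set.Finite.subset (List.finite_toSet pi.permutations)
    intro a ha
    simp only [Set.mem_setOf_eq, List.mem_permutations]
    exact (sortW_perm a).symm.trans (by rw [ha.2.1])
  calc S.ncard = (Φ '' S).ncard := (Set.ncard_image_of_injOn hinj).symm
    _ ≤ S'.ncard := Set.ncard_le_ncard
        (by rintro _ ⟨a, ha, rfl⟩; exact himg a ha) hfin'

end Aux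

/-- for a nondecreasing parking function `π` of length `n`, `0 ≤ j ≤ n`,
`c, c' ∈ PF_j` with `c↑ = c'↑` and `d, d' ∈ PF_{n-j}` with `d↑ = d'↑`, the number of
`a ∈ PF_n` with `a↑ = π`, `Park(a₁⋯a_j) = c`, `Park(a_{j+1}⋯a_n) = d` equals the
corresponding number for `(c', d')` (CQSym is a subcoalgebra of PQSym). -/
theorem CQSym_subcoalgebra (n j : ℕ) (hj : j ≤ n) (pi c c' d d' : List ℕ)
    (hpi : IsPF pi) (hpis : pi.Pairwise (· ≤ ·)) (hlen : pi.length = n)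
    (hc : IsPF c) (hlc : c.length = j) (hc' : IsPF c') (hlc' : c'.length = j)
    (hcc : sortW c = sortW c')
    (hd : IsPF d) (hld : d.length = n - j) (hd' : IsPF d') (hld' : d'.length = n - j)
    (hdd : sortW d = sortW d') :
    {a : List ℕ | IsPF a ∧ sortW a = pi ∧ park (a.take j) = c ∧
        park (a.drop j) = d}.ncard
      = {a : List ℕ | IsPF a ∧ sortW a = pi ∧ park (a.take j) = c' ∧
          park (a.drop j) = d'}.ncard := by
  have hcperm : c ~ c' := (hcc ▸ (sortW_perm c).symm).trans (sortW_perm c')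
  have hdperm : d ~ d' := (hdd ▸ (sortW_perm d).symm).trans (sortW_perm d')
  obtain ⟨p, hp0, hpc0⟩ := exists_applyP hcperm
  rw [hlc] at hp0
  obtain ⟨q, hq0, hqd0⟩ := exists_applyP hdperm
  rw [hld] at hq0
  obtain ⟨hpinvP, hpinv⟩ := invP_spec hp0
  obtain ⟨hqinvP, hqinv⟩ := invP_spec hq0
  apply _root_.le_antisymm
  · exact card_le_aux n j hj pi c c' d d' hlen p q hp0 hq0 hpc0 hqd0
  · refine card_le_aux n j hj pi c' c d' d hlen (invP j p) (invP (n - j) q)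
      hpinvP hqinvP ?_ ?_
    · rw [← hpc0]; exact hpinv c hlc
    · rw [← hqd0]; exact hqinv d hld
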